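/- Let γ > 0, let Ω ⊂ ℝ be open with Ω = ⋃_{k=1}^∞ Ω_k a decomposition into pairwise disjoint open intervals (possibly empty), and let f ∈ L¹_loc(Ω) with Var(f,Ω) < ∞. Then liminf_{λ→∞} F_{γ,λ}(f,Ω) ≥ ∑_{k=1}^∞ liminf_{λ→∞} F_{γ,λ}(f,Ω_k). -/

import Mathlib

open MeasureTheory Filter Set
open scoped ENNReal Topology

/-- The measure `ν_γ` on `ℝ × ℝ`: `ν_γ(A) = ∬_A |x - y|^(γ-1) dy dx`. -/
noncomputable def nuG (γ : ℝ) (A : Set (ℝ × ℝ)) : ℝ≥0∞ :=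
  ∫⁻ p in A, ENNReal.ofReal (|p.1 - p.2| ^ (γ - 1))

/-- The set `E_{γ,λ}(f,Ω) = {(x,y) ∈ Ω × Ω : |f(x) - f(y)| > λ |x - y|^(1+γ)}`. -/
def EG (γ lam : ℝ) (f : ℝ → ℝ) (Ω : Set ℝ) : Set (ℝ × ℝ) :=
  {p | p.1 ∈ Ω ∧ p.2 ∈ Ω ∧ lam * |p.1 - p.2| ^ (1 + γ) < |f p.1 - f p.2|}

/-- The functional `F_{γ,λ}(f,Ω) = λ ν_γ(E_{γ,λ}(f,Ω))`. -/
noncomputable def FG (γ lam : ℝ) (f : ℝ → ℝ) (Ω : Set ℝ) : ℝ≥0∞ :=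
  ENNReal.ofReal lam * nuG γ (EG γ lam f Ω)


/-- The variation `Var(f,Ω) = sup {∫_Ω f φ' dx : φ ∈ C¹_c(Ω), |φ| ≤ 1}`. -/
noncomputable def Var1 (f : ℝ → ℝ) (Ω : Set ℝ) : ℝ≥0∞ :=
  ⨆ (φ : ℝ → ℝ) (_ : ContDiff ℝ 1 φ) (_ : HasCompactSupport φ)
    (_ : tsupport φ ⊆ Ω) (_ : ∀ x, |φ x| ≤ 1),
    ENNReal.ofReal (∫ x in Ω, f x * deriv φ x)


/-- Let `γ > 0`, let `Ω ⊆ ℝ` be open with `Ω = ⋃ k, Ω k` a decomposition into pairwise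
disjoint open intervals (i.e. open order-connected sets, possibly empty), and let
`f ∈ L¹_loc(Ω)` with `Var(f,Ω) < ∞`. Then
`liminf_{λ→∞} F_{γ,λ}(f,Ω) ≥ ∑_{k=1}^∞ liminf_{λ→∞} F_{γ,λ}(f,Ω_k)`. -/
private lemma aux_liminf_add {ι : Type*} {F : Filter ι} (u v : ι → ℝ≥0∞) :
    Filter.liminf u F + Filter.liminf v F ≤ Filter.liminf (fun x => u x + v x) F := by
  have h0u : (0 : ℝ≥0∞) ∈ {a : ℝ≥0∞ | ∀ᶠ x in F, a ≤ u x} :=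
    Filter.Eventually.of_forall fun _ => zero_le
  have h0v : (0 : ℝ≥0∞) ∈ {a : ℝ≥0∞ | ∀ᶠ x in F, a ≤ v x} :=
    Filter.Eventually.of_forall fun _ => zero_le
  have : Nonempty {a : ℝ≥0∞ // a ∈ {a : ℝ≥0∞ | ∀ᶠ x in F, a ≤ u x}} := ⟨⟨0, h0u⟩⟩
  have : Nonempty {a : ℝ≥0∞ // a ∈ {a : ℝ≥0∞ | ∀ᶠ x in F, a ≤ v x}} := ⟨⟨0, h0v⟩⟩
  rw [Filter.liminf_eq, Filter.liminf_eq, sSup_eq_iSup', sSup_eq_iSup']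
  refine ENNReal.iSup_add_iSup_le fun a b => ?_
  refine Filter.le_liminf_of_le (by isBoundedDefault) ?_
  exact (a.2.and b.2).mono fun x hx => add_le_add hx.1 hx.2

theorem stmt14 (γ : ℝ) (hγ : 0 < γ) (Ω : Set ℝ) (hΩ : IsOpen Ω)
    (Ωk : ℕ → Set ℝ) (hOpen : ∀ k, IsOpen (Ωk k)) (hInt : ∀ k, (Ωk k).OrdConnected)
    (hdisj : Pairwise (Function.onFun Disjoint Ωk)) (hUnion : Ω = ⋃ k, Ωk k)
    (f : ℝ → ℝ) (hf : LocallyIntegrableOn f Ω) (hVar : Var1 f Ω < ⊤) :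
    ∑' k : ℕ, Filter.liminf (fun lam : ℝ => FG γ lam f (Ωk k)) Filter.atTop ≤
      Filter.liminf (fun lam : ℝ => FG γ lam f Ω) Filter.atTop := by
  classical
  -- Key pointwise bound: for any finite set of indices and any lam,
  -- the sum of the FG over the pieces is at most FG over Ω.
  have key : ∀ (s : Finset ℕ) (lam : ℝ),
      ∑ k ∈ s, FG γ lam f (Ωk k) ≤ FG γ lam f Ω := by
    intro s lam
    have hsub : ∀ k, Ωk k ⊆ Ω := by
      intro k; rw [hUnion]; exact Set.subset_iUnion Ωk k
    -- the "box" sets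
    set B : ℕ → Set (ℝ × ℝ) := fun k => (Ωk k) ×ˢ (Ωk k) with hB
    have hBmeas : ∀ k, MeasurableSet (B k) :=
      fun k => ((hOpen k).measurableSet).prod ((hOpen k).measurableSet)
    have hBdisj : Pairwise (Function.onFun Disjoint B) := by
      intro i j hij
      refine Set.disjoint_left.2 fun p hpi hpj => ?_
      exact Set.disjoint_left.1 (hdisj hij) hpi.1 hpj.1
    have hE : ∀ k, EG γ lam f (Ωk k) = EG γ lam f Ω ∩ B k := by
      intro k
      ext p
      simp only [EG, Set.mem_inter_iff, Set.mem_setOf_eq, Set.mem_prod, B]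
      constructor
      · rintro ⟨h1, h2, h3⟩; exact ⟨⟨hsub k h1, hsub k h2, h3⟩, h1, h2⟩
      · rintro ⟨⟨_, _, h3⟩, h1, h2⟩; exact ⟨h1, h2, h3⟩
    -- reduce to comparing the nuG parts
    simp only [FG, ← Finset.mul_sum]
    refine mul_le_mul_right ?_ _
    -- rewrite each integral as integral against a restricted measure
    set ν : Measure (ℝ × ℝ) := volume.restrict (EG γ lam f Ω) with hν
    have hres : ∀ k, nuG γ (EG γ lam f (Ωk k))
        = ∫⁻ p, ENNReal.ofReal (|p.1 - p.2| ^ (γ - 1)) ∂(ν.restrict (B k)) := by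
      intro k
      rw [hE k, hν, Measure.restrict_restrict (hBmeas k), Set.inter_comm]
      rfl
    calc ∑ k ∈ s, nuG γ (EG γ lam f (Ωk k))
        = ∫⁻ p, ENNReal.ofReal (|p.1 - p.2| ^ (γ - 1))
            ∂(∑ k ∈ s, ν.restrict (B k)) := by
          simp_rw [hres]; rw [lintegral_finset_sum_measure]
      _ ≤ ∫⁻ p, ENNReal.ofReal (|p.1 - p.2| ^ (γ - 1)) ∂ν := by
          refine lintegral_mono' ?_ le_rfl
          refine Measure.le_iff.2 fun A hA => ?_
          rw [Measure.finset_sum_apply]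
          have : ∀ k ∈ s, (ν.restrict (B k)) A = ν (A ∩ B k) := fun k _ =>
            Measure.restrict_apply hA
          rw [Finset.sum_congr rfl this,
            ← measure_biUnion_finset (fun i _ j _ hij =>
                (hBdisj hij).mono Set.inter_subset_right Set.inter_subset_right)
              (fun k _ => hA.inter (hBmeas k))]
          exact measure_mono (Set.iUnion₂_subset fun k _ => Set.inter_subset_left)
      _ = nuG γ (EG γ lam f Ω) := rfl
  -- sum of liminfs over a finite set is at most liminf of FG over Ω
  have fin : ∀ s : Finset ℕ,
      ∑ k ∈ s, Filter.liminf (fun lam : ℝ => FG γ lam f (Ωk k)) Filter.atTop ≤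
        Filter.liminf (fun lam : ℝ => FG γ lam f Ω) Filter.atTop := by
    intro s
    have step : ∑ k ∈ s, Filter.liminf (fun lam : ℝ => FG γ lam f (Ωk k)) Filter.atTop ≤
        Filter.liminf (fun lam : ℝ => ∑ k ∈ s, FG γ lam f (Ωk k)) Filter.atTop := by
      induction s using Finset.induction with
      | empty => simp
      | @insert k s hk ih =>
        rw [Finset.sum_insert hk]
        refine le_trans (add_le_add_right ih _) ?_
        refine (aux_liminf_add _ _).trans (le_of_eq ?_)
        congr 1
        funext lam
        simp [Finset.sum_insert hk]
    refine step.trans ?_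
    exact Filter.liminf_le_liminf (Filter.Eventually.of_forall fun lam => key s lam)
  rw [ENNReal.tsum_eq_iSup_sum]
  exact iSup_le fin
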